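/- arXiv:2511.18800 — 2 statements merged into one kernel-verified Lean document; each statement's English description precedes it below -/
import Mathlib

section
/- Let X(t) = (Q(t),P(t)) and X_d(t) = (Q_d(t),P_d(t)) be trajectories of the extended Lie-Poisson system Q̇ = QV, Ṗ = ad*_V P + τ with inputs (V,τ) and (V_d,τ_d) respectively. Then the right-invariant error E = X X_d⁻¹ = (QQ_d⁻¹, Ad*_{Q_d⁻¹}(P − P_d)) satisfies the extended Lie-Poisson equations Q̇_E = Q_E V_E, Ṗ_E = ad*_{V_E} P_E + τ_E, where (V_E, τ_E) = Ad_{X_d}(V − V_d, τ − τ_d) is the adjoint on the semidirect group G ⋉ g*. -/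
/-!
STATEMENT 7: Let X(t) = (Q(t),P(t)) and X_d(t) = (Q_d(t),P_d(t)) be
trajectories of the extended Lie-Poisson system Q̇ = QV, Ṗ = ad*_V P + τ
with inputs (V,τ) and (V_d,τ_d).  Then the right-invariant error
E = X X_d⁻¹ = (QQ_d⁻¹, Ad*_{Q_d⁻¹}(P − P_d)) satisfies the extended
Lie-Poisson equations Q̇_E = Q_E V_E, Ṗ_E = ad*_{V_E} P_E + τ_E, where
(V_E, τ_E) = Ad_{X_d}(V − V_d, τ − τ_d)
           = (Ad_{Q_d}(V − V_d), Ad*_{Q_d⁻¹}(ad*_{V−V_d} P_d + (τ − τ_d)))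
is the adjoint on the semidirect group G ⋉ g*.
G is the group of invertible n×n real matrices, g ≅ g* ≅ n×n matrices via
the trace pairing; Ad_Q V = Q V Q⁻¹, Ad*_Q P = Qᵀ P (Q⁻¹)ᵀ,
ad*_V P = Vᵀ P − P Vᵀ.
-/

open Matrix

noncomputable section

attribute [local instance]
  Matrix.linftyOpNormedAddCommGroup Matrix.linftyOpNormedSpace
  Matrix.linftyOpNormedRing Matrix.linftyOpNormedAlgebra

variable {n : ℕ}

/-- `ad*_V P = Vᵀ P − P Vᵀ`. -/
def coad (V P : Matrix (Fin n) (Fin n) ℝ) : Matrix (Fin n) (Fin n) ℝ :=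
  Vᵀ * P - P * Vᵀ


lemma hasDerivAt_mtranspose {f : ℝ → Matrix (Fin n) (Fin n) ℝ}
    {f' : Matrix (Fin n) (Fin n) ℝ} {t : ℝ} (hf : HasDerivAt f f' t) :
    HasDerivAt (fun s => (f s)ᵀ) f'ᵀ t := by
  have hL := (LinearMap.toContinuousLinearMap
      ((Matrix.transposeLinearEquiv (Fin n) (Fin n) ℝ ℝ).toLinearMap)).hasFDerivAt
      (x := f t)
  exact hL.comp_hasDerivAt t hf

lemma hasDerivAt_minv {f : ℝ → Matrix (Fin n) (Fin n) ℝ}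
    {f' : Matrix (Fin n) (Fin n) ℝ} {t : ℝ} (hf : HasDerivAt f f' t)
    (hu : IsUnit (f t)) :
    HasDerivAt (fun s => (f s)⁻¹) (-((f t)⁻¹ * f' * (f t)⁻¹)) t := by
  obtain ⟨u, hu⟩ := hu
  have h := (hasFDerivAt_ringInverse (𝕜 := ℝ) u)
  rw [hu] at h
  have h2 := h.comp_hasDerivAt t hf
  have hinv : (f t)⁻¹ = (↑u⁻¹ : Matrix (Fin n) (Fin n) ℝ) := by
    rw [Matrix.nonsing_inv_eq_ringInverse, ← hu, Ring.inverse_unit]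
  simp only [Matrix.nonsing_inv_eq_ringInverse, hinv]
  exact h2.congr_deriv (by simp)

theorem statement7 (n : ℕ)
    (Q P V τ Qd Pd Vd τd : ℝ → Matrix (Fin n) (Fin n) ℝ)
    -- Q and Q_d are curves in the matrix Lie group (invertible matrices)
    (hQ : ∀ t, IsUnit (Q t)) (hQd : ∀ t, IsUnit (Qd t))
    -- system trajectory: Q̇ = QV, Ṗ = ad*_V P + τ
    (hQdyn : ∀ t, HasDerivAt Q (Q t * V t) t)
    (hPdyn : ∀ t, HasDerivAt P (coad (V t) (P t) + τ t) t)
    -- desired trajectory: Q̇_d = Q_d V_d, Ṗ_d = ad*_{V_d} P_d + τ_d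
    (hQddyn : ∀ t, HasDerivAt Qd (Qd t * Vd t) t)
    (hPddyn : ∀ t, HasDerivAt Pd (coad (Vd t) (Pd t) + τd t) t)
    -- error state E = X X_d⁻¹ = (Q Q_d⁻¹, Ad*_{Q_d⁻¹}(P − P_d))
    (QE PE VE τE : ℝ → Matrix (Fin n) (Fin n) ℝ)
    (hQE : ∀ t, QE t = Q t * (Qd t)⁻¹)
    (hPE : ∀ t, PE t = ((Qd t)⁻¹)ᵀ * (P t - Pd t) * (Qd t)ᵀ)
    -- error input (V_E, τ_E) = Ad_{X_d}(V − V_d, τ − τ_d)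
    (hVE : ∀ t, VE t = Qd t * (V t - Vd t) * (Qd t)⁻¹)
    (hτE : ∀ t, τE t =
      ((Qd t)⁻¹)ᵀ * (coad (V t - Vd t) (Pd t) + (τ t - τd t)) * (Qd t)ᵀ) :
    (∀ t, HasDerivAt QE (QE t * VE t) t) ∧
    (∀ t, HasDerivAt PE (coad (VE t) (PE t) + τE t) t) := by
  have hQEfun : QE = fun s => Q s * (Qd s)⁻¹ := funext hQE
  have hPEfun : PE = fun s => ((Qd s)⁻¹)ᵀ * (P s - Pd s) * (Qd s)ᵀ := funext hPE
  constructor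
  · intro t
    have hdet : IsUnit (Qd t).det := (Matrix.isUnit_iff_isUnit_det _).mp (hQd t)
    have h1 : Qd t * (Qd t)⁻¹ = 1 := Matrix.mul_nonsing_inv _ hdet
    have h2 : (Qd t)⁻¹ * Qd t = 1 := Matrix.nonsing_inv_mul _ hdet
    have h2' : ∀ x : Matrix (Fin n) (Fin n) ℝ, (Qd t)⁻¹ * (Qd t * x) = x := by
      intro x; rw [← mul_assoc, h2, one_mul]
    have hinv := hasDerivAt_minv (hQddyn t) (hQd t)
    have hd := (hQdyn t).mul hinv
    rw [hQEfun]
    refine hd.congr_deriv ?_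
    simp only [hQE, hVE, Matrix.mul_sub, Matrix.sub_mul, mul_assoc, h2', mul_neg]
    abel
  · intro t
    have hdet : IsUnit (Qd t).det := (Matrix.isUnit_iff_isUnit_det _).mp (hQd t)
    have h1 : Qd t * (Qd t)⁻¹ = 1 := Matrix.mul_nonsing_inv _ hdet
    have h2 : (Qd t)⁻¹ * Qd t = 1 := Matrix.nonsing_inv_mul _ hdet
    have h3 : (Qd t)ᵀ * ((Qd t)⁻¹)ᵀ = 1 := by
      rw [← Matrix.transpose_mul, h2, Matrix.transpose_one]
    have h4 : ((Qd t)⁻¹)ᵀ * (Qd t)ᵀ = 1 := by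
      rw [← Matrix.transpose_mul, h1, Matrix.transpose_one]
    have h3' : ∀ x : Matrix (Fin n) (Fin n) ℝ, (Qd t)ᵀ * (((Qd t)⁻¹)ᵀ * x) = x := by
      intro x; rw [← mul_assoc, h3, one_mul]
    have h4' : ∀ x : Matrix (Fin n) (Fin n) ℝ, ((Qd t)⁻¹)ᵀ * ((Qd t)ᵀ * x) = x := by
      intro x; rw [← mul_assoc, h4, one_mul]
    have hA := hasDerivAt_mtranspose (hasDerivAt_minv (hQddyn t) (hQd t))
    have hB := hasDerivAt_mtranspose (hQddyn t)
    have hC := (hPdyn t).sub (hPddyn t)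
    have hdetT : IsUnit (Qd t)ᵀ.det := by rwa [Matrix.det_transpose]
    have hT3' : ∀ x : Matrix (Fin n) (Fin n) ℝ, (Qd t)ᵀ * ((Qd t)ᵀ⁻¹ * x) = x := by
      intro x; rw [← mul_assoc, Matrix.mul_nonsing_inv _ hdetT, one_mul]
    have hT4' : ∀ x : Matrix (Fin n) (Fin n) ℝ, (Qd t)ᵀ⁻¹ * ((Qd t)ᵀ * x) = x := by
      intro x; rw [← mul_assoc, Matrix.nonsing_inv_mul _ hdetT, one_mul]
    have hd := (hA.mul hC).mul hB
    rw [hPEfun]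
    refine hd.congr_deriv ?_
    simp only [hPE, hVE, hτE, coad, Matrix.transpose_mul, Matrix.transpose_sub,
      Matrix.transpose_neg, Matrix.transpose_nonsing_inv, Matrix.mul_sub,
      Matrix.sub_mul, Matrix.mul_add, Matrix.add_mul, mul_assoc, h3', h4', hT3', hT4',
      mul_neg, neg_mul, neg_sub, Matrix.transpose_transpose, Pi.mul_apply, Pi.sub_apply]
    abel
end
end

section
/- Along trajectories of the Lie-Poisson system Q̇ = QV, Ṗ = ad*_V P + τ with V = I_t⁻¹[P] and control τ = Ṡ_t* S_t^{−*}[P] − R[V] − L*_Q dΥ(Q), the Lyapunov function L(Q,P,t) = ½⟨P, I_t⁻¹[P]⟩ + Υ(Q) satisfies L̇ = −R(V, V) ≤ 0. -/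
/-!
STATEMENT 10: Along trajectories of the Lie-Poisson system Q̇ = QV,
Ṗ = ad*_V P + τ with V = I_t⁻¹[P] and control
τ = Ṡ_t* S_t^{−*}[P] − R[V] − L*_Q dΥ(Q), the Lyapunov function
L(Q,P,t) = ½⟨P, I_t⁻¹[P]⟩ + Υ(Q) satisfies L̇ = −R(V,V) ≤ 0.
Setting: G is the group of invertible n×n real matrices, g ≅ g* ≅ n×n
matrices via the trace pairing ⟨P,U⟩ = tr(Pᵀ U); ad*_V P = Vᵀ P − P Vᵀ.
I_t = S_t* ∘ I₀ ∘ S_t with I₀ self-adjoint and positive definite and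
S_t : g → g invertible; S_t* is the dual of S_t (characterised by the
pairing), S_t^{−*} = (S_t*)⁻¹ and Ṡ_t* the time derivative of S_t*.
The constraint V = I_t⁻¹[P] is expressed as I_t[V] = P, under which
½⟨P, I_t⁻¹[P]⟩ = ½⟨P, V⟩.  Υ : g-ambient space → ℝ is smooth and
⟨L*_Q dΥ(Q), U⟩ = ⟨dΥ(Q), QU⟩.  R is a positive-definite symmetric
(0,2)-tensor on g, acting as R[V] ∈ g*, with R(V,W) = ⟨R[V], W⟩.
-/

open Matrix

noncomputable section

attribute [local instance]
  Matrix.linftyOpNormedAddCommGroup Matrix.linftyOpNormedSpace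
  Matrix.linftyOpNormedRing Matrix.linftyOpNormedAlgebra

variable {n : ℕ}

/-- trace pairing between g* and g. -/
def pairg (P U : Matrix (Fin n) (Fin n) ℝ) : ℝ := (Pᵀ * U).trace

section St10Helpers

lemma pairg_eq_sum (A B : Matrix (Fin n) (Fin n) ℝ) :
    pairg A B = ∑ i, ∑ j, A i j * B i j := by
  unfold pairg
  simp [Matrix.trace, Matrix.diag, Matrix.mul_apply, Matrix.transpose_apply]
  exact Finset.sum_comm

lemma pairg_std_left (i j : Fin n) (B : Matrix (Fin n) (Fin n) ℝ) :
    pairg (Matrix.single i j 1) B = B i j := by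
  simp [pairg_eq_sum, Matrix.single, ite_and]

lemma pairg_std_right (i j : Fin n) (A : Matrix (Fin n) (Fin n) ℝ) :
    pairg A (Matrix.single i j 1) = A i j := by
  simp [pairg_eq_sum, Matrix.single, ite_and]

lemma pairg_add_left (A B C : Matrix (Fin n) (Fin n) ℝ) :
    pairg (A + B) C = pairg A C + pairg B C := by
  simp [pairg, Matrix.transpose_add, Matrix.add_mul]

lemma pairg_sub_left (A B C : Matrix (Fin n) (Fin n) ℝ) :
    pairg (A - B) C = pairg A C - pairg B C := by
  simp [pairg, Matrix.transpose_sub, Matrix.sub_mul]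

lemma pairg_smul_left (c : ℝ) (A C : Matrix (Fin n) (Fin n) ℝ) :
    pairg (c • A) C = c * pairg A C := by
  simp [pairg, Matrix.transpose_smul, Matrix.smul_mul]

lemma pairg_smul_right (c : ℝ) (A C : Matrix (Fin n) (Fin n) ℝ) :
    pairg A (c • C) = c * pairg A C := by
  simp [pairg, Matrix.mul_smul]

lemma pairg_sum_left {ι : Type*} (s : Finset ι) (f : ι → Matrix (Fin n) (Fin n) ℝ)
    (C : Matrix (Fin n) (Fin n) ℝ) :
    pairg (∑ x ∈ s, f x) C = ∑ x ∈ s, pairg (f x) C := by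
  simp [pairg, Matrix.transpose_sum, Matrix.sum_mul, Matrix.trace_sum]

lemma pairg_sum_right {ι : Type*} (s : Finset ι) (f : ι → Matrix (Fin n) (Fin n) ℝ)
    (C : Matrix (Fin n) (Fin n) ℝ) :
    pairg C (∑ x ∈ s, f x) = ∑ x ∈ s, pairg C (f x) := by
  simp [pairg, Matrix.mul_sum, Matrix.trace_sum]

lemma pairg_coad_self (V P : Matrix (Fin n) (Fin n) ℝ) :
    pairg (coad V P) V = 0 := by
  simp only [pairg, coad, Matrix.transpose_sub, Matrix.transpose_mul, Matrix.transpose_transpose,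
    Matrix.sub_mul, Matrix.trace_sub, Matrix.mul_assoc]
  rw [Matrix.trace_mul_comm V (Pᵀ * V), Matrix.mul_assoc, sub_self]

lemma st10_expand (M : Matrix (Fin n) (Fin n) ℝ) :
    ∑ i, ∑ j, M i j • Matrix.single i j (1:ℝ) = M := by
  conv_rhs => rw [Matrix.matrix_eq_sum_single M]
  simp [Matrix.smul_single]

lemma st10_map_expand (L : Matrix (Fin n) (Fin n) ℝ →ₗ[ℝ] Matrix (Fin n) (Fin n) ℝ)
    (X : Matrix (Fin n) (Fin n) ℝ) :
    ∑ i, ∑ j, X i j • L (Matrix.single i j 1) = L X := by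
  conv_rhs => rw [← st10_expand X]
  simp only [map_sum, _root_.map_smul]

lemma st10_pairg_lin (L : Matrix (Fin n) (Fin n) ℝ →ₗ[ℝ] Matrix (Fin n) (Fin n) ℝ)
    (X Y : Matrix (Fin n) (Fin n) ℝ) :
    ∑ i, ∑ j, X i j * pairg (L (Matrix.single i j 1)) Y = pairg (L X) Y := by
  conv_rhs => rw [← st10_expand X]
  simp only [map_sum, _root_.map_smul, pairg_sum_left, pairg_smul_left]

lemma st10_entry {t : ℝ} {f : ℝ → Matrix (Fin n) (Fin n) ℝ} {f' : Matrix (Fin n) (Fin n) ℝ}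
    (hf : HasDerivAt f f' t) (i j : Fin n) :
    HasDerivAt (fun s => f s i j) (f' i j) t := by
  have h := ((LinearMap.toContinuousLinearMap
    (Matrix.entryLinearMap ℝ ℝ i j)).hasFDerivAt (x := f t)).comp_hasDerivAt t hf
  exact h

lemma st10_lin {t : ℝ} {f : ℝ → Matrix (Fin n) (Fin n) ℝ} {f' : Matrix (Fin n) (Fin n) ℝ}
    (L : Matrix (Fin n) (Fin n) ℝ →ₗ[ℝ] Matrix (Fin n) (Fin n) ℝ)
    (hf : HasDerivAt f f' t) :
    HasDerivAt (fun s => L (f s)) (L f') t := by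
  have h := ((LinearMap.toContinuousLinearMap L).hasFDerivAt (x := f t)).comp_hasDerivAt t hf
  exact h

lemma st10_pairg {t : ℝ} {f g : ℝ → Matrix (Fin n) (Fin n) ℝ}
    {f' g' : Matrix (Fin n) (Fin n) ℝ}
    (hf : HasDerivAt f f' t) (hg : HasDerivAt g g' t) :
    HasDerivAt (fun s => pairg (f s) (g s)) (pairg f' (g t) + pairg (f t) g') t := by
  have h2 := HasDerivAt.sum (fun i (_ : i ∈ Finset.univ) =>
    HasDerivAt.sum fun j (_ : j ∈ Finset.univ) =>
      (st10_entry hf i j).mul (st10_entry hg i j))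
  have heq : (fun s => pairg (f s) (g s)) = fun s => ∑ i, ∑ j, f s i j * g s i j := by
    funext s; exact pairg_eq_sum _ _
  rw [heq, pairg_eq_sum, pairg_eq_sum]
  convert h2 using 1
  · rfl
  · rfl
  · funext s; simp [Finset.sum_apply]
  rw [← Finset.sum_add_distrib]
  exact Finset.sum_congr rfl fun i _ => by rw [← Finset.sum_add_distrib]

end St10Helpers

theorem statement10 (n : ℕ)
    (Q P V : ℝ → Matrix (Fin n) (Fin n) ℝ)
    (hQunit : ∀ t, IsUnit (Q t))
    -- the inertia: I_t = S_t* ∘ I₀ ∘ S_t, with S_t invertible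
    (S Sdual Sdual' SdualInv : ℝ → Matrix (Fin n) (Fin n) ℝ →ₗ[ℝ] Matrix (Fin n) (Fin n) ℝ)
    (I₀ : Matrix (Fin n) (Fin n) ℝ →ₗ[ℝ] Matrix (Fin n) (Fin n) ℝ)
    (hS0 : S 0 = LinearMap.id)
    (hSbij : ∀ t, Function.Bijective (S t))
    -- Sdual t is the dual map S_t* w.r.t. the trace pairing
    (hSdual : ∀ t P' X, pairg (Sdual t P') X = pairg P' (S t X))
    -- SdualInv t = (S_t*)⁻¹ = S_t^{−*}
    (hSdualInv : ∀ t P', Sdual t (SdualInv t P') = P' ∧ SdualInv t (Sdual t P') = P')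
    -- Sdual' t = Ṡ_t*, the time derivative of S_t*
    (hSdual' : ∀ t X, HasDerivAt (fun s => Sdual s X) (Sdual' t X) t)
    -- I₀ self-adjoint and positive definite
    (hI₀sym : ∀ X Y, pairg (I₀ X) Y = pairg (I₀ Y) X)
    (hI₀pos : ∀ X, X ≠ 0 → 0 < pairg (I₀ X) X)
    -- velocity constraint V = I_t⁻¹[P], i.e. I_t[V] = P, V smooth
    (hV : ∀ t, Sdual t (I₀ (S t (V t))) = P t)
    (hVdiff : Differentiable ℝ V)
    -- navigation-type potential Υ and its left-trivialised differential DU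
    (Υ : Matrix (Fin n) (Fin n) ℝ → ℝ) (hΥ : Differentiable ℝ Υ)
    (DU : ℝ → Matrix (Fin n) (Fin n) ℝ)
    (hDU : ∀ t X, pairg (DU t) X = fderiv ℝ Υ (Q t) (Q t * X))
    -- Rayleigh dissipation: positive-definite symmetric (0,2) tensor
    (Rb : Matrix (Fin n) (Fin n) ℝ →ₗ[ℝ] Matrix (Fin n) (Fin n) ℝ)
    (hRsym : ∀ X Y, pairg (Rb X) Y = pairg (Rb Y) X)
    (hRpos : ∀ X, X ≠ 0 → 0 < pairg (Rb X) X)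
    -- closed-loop dynamics: Q̇ = QV, Ṗ = ad*_V P + τ with
    -- τ = Ṡ_t* S_t^{−*}[P] − R[V] − L*_Q dΥ(Q)
    (hQdyn : ∀ t, HasDerivAt Q (Q t * V t) t)
    (hPdyn : ∀ t, HasDerivAt P
      (coad (V t) (P t) +
        (Sdual' t (SdualInv t (P t)) - Rb (V t) - DU t)) t) :
    ∀ t, HasDerivAt (fun s => (1 / 2 : ℝ) * pairg (P s) (V s) + Υ (Q s))
        (-(pairg (Rb (V t)) (V t))) t ∧
      -(pairg (Rb (V t)) (V t)) ≤ 0 := by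
  intro t
  have hVd : HasDerivAt V (deriv V t) t := (hVdiff t).hasDerivAt
  set V' := deriv V t with hV'def
  -- expansion of W s = S s (V s)
  have hWexp : ∀ s, S s (V s) =
      ∑ i, ∑ j, pairg (Sdual s (Matrix.single i j 1)) (V s) • Matrix.single i j (1:ℝ) := by
    intro s
    conv_lhs => rw [← st10_expand (S s (V s))]
    exact Finset.sum_congr rfl fun i _ => Finset.sum_congr rfl fun j _ => by
      rw [← (hSdual s _ _).trans (pairg_std_left i j _)]
  set W' : Matrix (Fin n) (Fin n) ℝ :=
    ∑ i, ∑ j, (pairg (Sdual' t (Matrix.single i j 1)) (V t)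
      + pairg (Sdual t (Matrix.single i j 1)) V') • Matrix.single i j (1:ℝ) with hW'def
  have hW : HasDerivAt (fun s => S s (V s)) W' t := by
    have h := HasDerivAt.sum (fun i (_ : i ∈ Finset.univ) =>
      HasDerivAt.sum fun j (_ : j ∈ Finset.univ) =>
        (st10_pairg (hSdual' t (Matrix.single i j 1)) hVd).smul_const
          (Matrix.single i j (1:ℝ)))
    exact h.congr_of_eventuallyEq (Filter.Eventually.of_forall fun s => (hWexp s).trans (by simp [Finset.sum_apply]))
  have hK : HasDerivAt (fun s => I₀ (S s (V s))) (I₀ W') t := st10_lin I₀ hW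
  -- derivative of P via the constraint
  have hΦexp : ∀ s, P s = ∑ i, ∑ j, (I₀ (S s (V s))) i j • Sdual s (Matrix.single i j 1) := by
    intro s
    rw [← hV s]
    conv_lhs => rw [← st10_expand (I₀ (S s (V s)))]
    simp only [map_sum, _root_.map_smul]
  have hΦ : HasDerivAt P (∑ i, ∑ j, ((I₀ (S t (V t))) i j • Sdual' t (Matrix.single i j 1)
      + (I₀ W') i j • Sdual t (Matrix.single i j 1))) t := by
    have h := HasDerivAt.sum (fun i (_ : i ∈ Finset.univ) =>
      HasDerivAt.sum fun j (_ : j ∈ Finset.univ) =>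
        (st10_entry hK i j).smul (hSdual' t (Matrix.single i j 1)))
    exact h.congr_of_eventuallyEq (Filter.Eventually.of_forall fun s => (hΦexp s).trans (by simp [Finset.sum_apply]))
  have hΦval : (∑ i, ∑ j, ((I₀ (S t (V t))) i j • Sdual' t (Matrix.single i j 1)
      + (I₀ W') i j • Sdual t (Matrix.single i j 1)))
      = Sdual' t (I₀ (S t (V t))) + Sdual t (I₀ W') := by
    simp only [Finset.sum_add_distrib]
    rw [st10_map_expand, st10_map_expand]
  rw [hΦval] at hΦ
  have hEq := hΦ.unique (hPdyn t)
  have hKt : I₀ (S t (V t)) = SdualInv t (P t) := by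
    rw [← hV t]; exact ((hSdualInv t _).2).symm
  rw [hKt] at hEq
  have h2 : Sdual t (I₀ W') = coad (V t) (P t) - Rb (V t) - DU t := by
    have h4 : Sdual' t (SdualInv t (P t)) + Sdual t (I₀ W')
        = Sdual' t (SdualInv t (P t)) + (coad (V t) (P t) - Rb (V t) - DU t) := by
      rw [hEq]; abel
    exact add_left_cancel h4
  -- pairing consequences
  have hB : pairg (I₀ (S t (V t))) W' = - pairg (Rb (V t)) (V t) - pairg (DU t) (V t) := by
    have h4 := congrArg (fun M => pairg M (V t)) h2
    rw [hSdual, pairg_sub_left, pairg_sub_left, pairg_coad_self] at h4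
    rw [← hI₀sym] at h4
    rw [h4]; ring
  have hWpair : pairg (I₀ (S t (V t))) W'
      = pairg (Sdual' t (SdualInv t (P t))) (V t) + pairg (P t) V' := by
    have h5 : pairg (I₀ (S t (V t))) W'
        = ∑ i, ∑ j, ((I₀ (S t (V t))) i j * pairg (Sdual' t (Matrix.single i j 1)) (V t)
          + (I₀ (S t (V t))) i j * pairg (Sdual t (Matrix.single i j 1)) V') := by
      rw [hW'def, pairg_sum_right]
      refine Finset.sum_congr rfl fun i _ => ?_
      rw [pairg_sum_right]
      refine Finset.sum_congr rfl fun j _ => ?_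
      rw [pairg_smul_right, pairg_std_right]; ring
    rw [h5]
    simp only [Finset.sum_add_distrib]
    rw [st10_pairg_lin, st10_pairg_lin, hV t, hKt]
  -- derivative of the potential term
  have hD2 : HasDerivAt (fun s => Υ (Q s)) (pairg (DU t) (V t)) t := by
    have h6 := ((hΥ (Q t)).hasFDerivAt).comp_hasDerivAt t (hQdyn t)
    exact h6.congr_deriv (hDU t (V t)).symm
  have hD1 : HasDerivAt (fun s => (1 / 2 : ℝ) * pairg (P s) (V s))
      ((1 / 2 : ℝ) * (pairg (coad (V t) (P t)
        + (Sdual' t (SdualInv t (P t)) - Rb (V t) - DU t)) (V t) + pairg (P t) V')) t :=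
    (st10_pairg (hPdyn t) hVd).const_mul _
  have hD := hD1.add hD2
  have hPV : pairg (coad (V t) (P t)
      + (Sdual' t (SdualInv t (P t)) - Rb (V t) - DU t)) (V t)
      = pairg (Sdual' t (SdualInv t (P t))) (V t) - pairg (Rb (V t)) (V t)
        - pairg (DU t) (V t) := by
    rw [pairg_add_left, pairg_sub_left, pairg_sub_left, pairg_coad_self]; ring
  constructor
  · have hval : (1 / 2 : ℝ) * (pairg (coad (V t) (P t)
        + (Sdual' t (SdualInv t (P t)) - Rb (V t) - DU t)) (V t) + pairg (P t) V')
        + pairg (DU t) (V t) = -(pairg (Rb (V t)) (V t)) := by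
      rw [hPV]
      have h7 : pairg (Sdual' t (SdualInv t (P t))) (V t) + pairg (P t) V'
          = - pairg (Rb (V t)) (V t) - pairg (DU t) (V t) := hWpair ▸ hB
      linarith
    rw [← hval]
    exact hD
  · rcases eq_or_ne (V t) 0 with h | h
    · simp [h, pairg]
    · have := hRpos (V t) h
      linarith
end
end
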